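/- arXiv:2411.00339 — 3 statements merged into one kernel-verified Lean document; each statement's English description precedes it below -/
import Mathlib

section
/- The map (μ, σ) ↦ σ · ierfc((m − μ)/(√2 σ)) on ℝ × (0, ∞) is strictly increasing in μ for fixed σ, and strictly increasing in σ for fixed μ. Consequently, if μ₋ < μ < μ₊ and σ₋ < σ < σ₊, then σ₋ ierfc((m−μ₋)/(√2 σ₋)) < σ ierfc((m−μ)/(√2 σ)) < σ₊ ierfc((m−μ₊)/(√2 σ₊)). -/
open Real

/-- The complementary error function `erfc x = (2/√π) ∫_x^∞ e^{−u²} du`. -/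
noncomputable def erfc (x : ℝ) : ℝ := (2 / Real.sqrt π) * ∫ u in Set.Ioi x, Real.exp (-u ^ 2)

/-- `ierfc` in closed form: `ierfc x = e^{−x²}/√π − x · erfc x`. -/
noncomputable def ierfc (x : ℝ) : ℝ := Real.exp (-x ^ 2) / Real.sqrt π - x * erfc x

open MeasureTheory


lemma integrable_gauss : MeasureTheory.Integrable fun u : ℝ => Real.exp (-u ^ 2) := by
  have := integrable_exp_neg_mul_sq (by norm_num : (0:ℝ) < 1)
  simpa using this

lemma cont_gauss : Continuous fun u : ℝ => Real.exp (-u ^ 2) := by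
  continuity

lemma E_pos (x : ℝ) : 0 < ∫ u in Set.Ioi x, Real.exp (-u ^ 2) := by
  rw [setIntegral_pos_iff_support_of_nonneg_ae]
  · have hs : Function.support (fun u : ℝ => Real.exp (-u ^ 2)) = Set.univ := by
      ext u; simp [Real.exp_ne_zero]
    rw [hs, Set.univ_inter, Real.volume_Ioi]
    simp
  · filter_upwards with u using (Real.exp_pos _).le
  · exact integrable_gauss.integrableOn

lemma hasDerivAt_E (x : ℝ) :
    HasDerivAt (fun x : ℝ => ∫ u in Set.Ioi x, Real.exp (-u ^ 2))
      (-(Real.exp (-x ^ 2))) x := by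
  have key : ∀ y : ℝ, ∫ u in Set.Ioi y, Real.exp (-u ^ 2)
      = (∫ u : ℝ, Real.exp (-u ^ 2)) - (∫ u in Set.Iic (0:ℝ), Real.exp (-u ^ 2))
        - ∫ u in (0:ℝ)..y, Real.exp (-u ^ 2) := by
    intro y
    have h1 := intervalIntegral.integral_Iic_add_Ioi (f := fun u : ℝ => Real.exp (-u ^ 2))
      (b := y) integrable_gauss.integrableOn integrable_gauss.integrableOn
    have h2 := intervalIntegral.integral_Iic_sub_Iic (f := fun u : ℝ => Real.exp (-u ^ 2))
      (a := (0:ℝ)) (b := y) integrable_gauss.integrableOn integrable_gauss.integrableOn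
    linarith
  have hF : HasDerivAt (fun y : ℝ => ∫ u in (0:ℝ)..y, Real.exp (-u ^ 2))
      (Real.exp (-x ^ 2)) x :=
    intervalIntegral.integral_hasDerivAt_right integrable_gauss.intervalIntegrable
      cont_gauss.aestronglyMeasurable.stronglyMeasurableAtFilter cont_gauss.continuousAt
  have h3 : HasDerivAt (fun y : ℝ => ((∫ u : ℝ, Real.exp (-u ^ 2))
      - (∫ u in Set.Iic (0:ℝ), Real.exp (-u ^ 2))) - ∫ u in (0:ℝ)..y, Real.exp (-u ^ 2))
      (0 - Real.exp (-x ^ 2)) x := (hasDerivAt_const x _).sub hF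
  rw [zero_sub] at h3
  refine HasDerivAt.congr_of_eventuallyEq h3 ?_
  filter_upwards with y
  rw [key y]

lemma erfc_pos (x : ℝ) : 0 < erfc x :=
  mul_pos (div_pos two_pos (Real.sqrt_pos.2 Real.pi_pos)) (E_pos x)

lemma hasDerivAt_erfc (x : ℝ) :
    HasDerivAt erfc (-(2 / Real.sqrt π * Real.exp (-x ^ 2))) x := by
  have := (hasDerivAt_E x).const_mul (2 / Real.sqrt π)
  have h : HasDerivAt erfc (2 / Real.sqrt π * -(Real.exp (-x ^ 2))) x := this
  rw [mul_neg] at h; exact h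

lemma hasDerivAt_exp_neg_sq (x : ℝ) :
    HasDerivAt (fun x : ℝ => Real.exp (-x ^ 2)) (-2 * x * Real.exp (-x ^ 2)) x := by
  have h1 : HasDerivAt (fun x : ℝ => -x ^ 2) (-2 * x) x := by
    have h := ((hasDerivAt_pow 2 x).neg); simp at h; rw [neg_mul]; exact h
  simpa [mul_comm] using h1.exp

lemma hasDerivAt_ierfc (x : ℝ) : HasDerivAt ierfc (-(erfc x)) x := by
  have h1 : HasDerivAt (fun x : ℝ => Real.exp (-x ^ 2) / Real.sqrt π)
      (-2 * x * Real.exp (-x ^ 2) / Real.sqrt π) x := (hasDerivAt_exp_neg_sq x).div_const _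
  have h2 : HasDerivAt (fun x : ℝ => x * erfc x)
      (1 * erfc x + x * -(2 / Real.sqrt π * Real.exp (-x ^ 2))) x :=
    (hasDerivAt_id x).mul (hasDerivAt_erfc x)
  have h3 := h1.sub h2
  have he : Real.sqrt π ≠ 0 := ne_of_gt (Real.sqrt_pos.2 Real.pi_pos)
  refine h3.congr_deriv ?_
  ring

lemma ierfc_key (x : ℝ) : ierfc x + x * erfc x = Real.exp (-x ^ 2) / Real.sqrt π := by
  simp [ierfc]

lemma hasDerivAt_f (m : ℝ) {σ : ℝ} (hσ : 0 < σ) (μ : ℝ) :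
    HasDerivAt (fun μ : ℝ => σ * ierfc ((m - μ) / (Real.sqrt 2 * σ)))
      (σ * (erfc ((m - μ) / (Real.sqrt 2 * σ)) * (Real.sqrt 2 * σ)⁻¹)) μ := by
  have hinner : HasDerivAt (fun μ : ℝ => (m - μ) / (Real.sqrt 2 * σ))
      (-(Real.sqrt 2 * σ)⁻¹) μ := by
    have h : HasDerivAt (fun μ : ℝ => (m - μ) * (Real.sqrt 2 * σ)⁻¹)
        (-1 * (Real.sqrt 2 * σ)⁻¹) μ :=
      (((hasDerivAt_id μ).const_sub m)).mul_const _
    have : (fun μ : ℝ => (m - μ) * (Real.sqrt 2 * σ)⁻¹)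
        = fun μ : ℝ => (m - μ) / (Real.sqrt 2 * σ) := by
      funext y; rw [div_eq_mul_inv]
    rw [this] at h
    simpa using h
  have hc := (hasDerivAt_ierfc ((m - μ) / (Real.sqrt 2 * σ))).comp μ hinner
  have := hc.const_mul σ
  refine this.congr_deriv ?_
  ring

lemma hasDerivAt_g (m μ : ℝ) {σ : ℝ} (hσ : 0 < σ) :
    HasDerivAt (fun σ : ℝ => σ * ierfc ((m - μ) / (Real.sqrt 2 * σ)))
      (Real.exp (-((m - μ) / (Real.sqrt 2 * σ)) ^ 2) / Real.sqrt π) σ := by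
  set c : ℝ := (m - μ) / Real.sqrt 2 with hc
  have hσ' : σ ≠ 0 := ne_of_gt hσ
  have heq : (fun σ : ℝ => (m - μ) / (Real.sqrt 2 * σ)) = fun σ : ℝ => c * σ⁻¹ := by
    funext y; rw [hc, ← div_div, div_eq_mul_inv]
  have hinner : HasDerivAt (fun σ : ℝ => (m - μ) / (Real.sqrt 2 * σ))
      (c * -(σ ^ 2)⁻¹) σ := by
    rw [heq]; exact (hasDerivAt_inv hσ').const_mul c
  have hzeta : (m - μ) / (Real.sqrt 2 * σ) = c / σ := by
    rw [congrFun heq σ, div_eq_mul_inv]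
  have hcomp := (hasDerivAt_ierfc ((m - μ) / (Real.sqrt 2 * σ))).comp σ hinner
  have hprod := (hasDerivAt_id σ).mul hcomp
  refine hprod.congr_deriv ?_
  symm
  have hid : ierfc (c / σ) + (c / σ) * erfc (c / σ)
      = Real.exp (-(c / σ) ^ 2) / Real.sqrt π := ierfc_key _
  rw [hzeta]
  rw [← hid]
  have : Function.comp ierfc (fun σ : ℝ => (m - μ) / (Real.sqrt 2 * σ)) σ
      = ierfc (c / σ) := by simp [Function.comp, hzeta]
  rw [this]
  field_simp
  simp only [id]
  ring

/-- The map `(μ, σ) ↦ σ · ierfc((m − μ)/(√2 σ))` is strictly increasing in `μ`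
for fixed `σ > 0` and strictly increasing in `σ > 0` for fixed `μ`;
consequently nested confidence bounds on `(μ, σ)` give nested bounds on the
oracle quantity. -/
theorem sigma_ierfc_strict_mono (m : ℝ) :
    (∀ σ : ℝ, 0 < σ →
      StrictMono fun μ : ℝ => σ * ierfc ((m - μ) / (Real.sqrt 2 * σ))) ∧
    (∀ μ : ℝ,
      StrictMonoOn (fun σ : ℝ => σ * ierfc ((m - μ) / (Real.sqrt 2 * σ))) (Set.Ioi 0)) ∧
    (∀ μm μ μp σm σ σp : ℝ, 0 < σm →
      μm < μ → μ < μp → σm < σ → σ < σp →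
      σm * ierfc ((m - μm) / (Real.sqrt 2 * σm)) < σ * ierfc ((m - μ) / (Real.sqrt 2 * σ)) ∧
      σ * ierfc ((m - μ) / (Real.sqrt 2 * σ)) < σp * ierfc ((m - μp) / (Real.sqrt 2 * σp))) := by
  have hmu : ∀ σ : ℝ, 0 < σ →
      StrictMono fun μ : ℝ => σ * ierfc ((m - μ) / (Real.sqrt 2 * σ)) := by
    intro σ hσ
    apply strictMono_of_deriv_pos
    intro μ
    rw [(hasDerivAt_f m hσ μ).deriv]
    have h := erfc_pos ((m - μ) / (Real.sqrt 2 * σ))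
    positivity
  have hsig : ∀ μ : ℝ,
      StrictMonoOn (fun σ : ℝ => σ * ierfc ((m - μ) / (Real.sqrt 2 * σ))) (Set.Ioi 0) := by
    intro μ
    apply strictMonoOn_of_deriv_pos (convex_Ioi 0)
    · intro σ hσ
      exact (hasDerivAt_g m μ hσ).differentiableAt.continuousAt.continuousWithinAt
    · intro σ hσ
      rw [interior_Ioi] at hσ
      rw [(hasDerivAt_g m μ hσ).deriv]
      positivity
  refine ⟨hmu, hsig, ?_⟩
  intro μm μ μp σm σ σp hσm hμm hμp hσ hσp
  have hσ0 : (0:ℝ) < σ := hσm.trans hσ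
  have hσp0 : (0:ℝ) < σp := hσ0.trans hσp
  constructor
  · calc σm * ierfc ((m - μm) / (Real.sqrt 2 * σm))
        < σm * ierfc ((m - μ) / (Real.sqrt 2 * σm)) := hmu σm hσm hμm
      _ < σ * ierfc ((m - μ) / (Real.sqrt 2 * σ)) := hsig μ hσm hσ0 hσ
  · calc σ * ierfc ((m - μ) / (Real.sqrt 2 * σ))
        < σ * ierfc ((m - μp) / (Real.sqrt 2 * σ)) := hmu σ hσ0 hμp
      _ < σp * ierfc ((m - μp) / (Real.sqrt 2 * σp)) := hsig μp hσ0 hσp0 hσp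
end

section
/- For Gaussian arms with parameters (μ₁, σ₁) = (0, 1) and (μ₂, σ₂) = (−1, 2) and threshold m = 0.5, the expected-improvement quantities satisfy σ₁ ierfc((m−μ₁)/(√2σ₁)) < σ₂ ierfc((m−μ₂)/(√2σ₂)) while the probabilities of improvement satisfy erfc((m−μ₁)/(√2σ₁)) > erfc((m−μ₂)/(√2σ₂)). Hence the max-bandit (EI) oracle and the PI oracle select different best arms. -/
open Real MeasureTheory Set

private lemma expInt : Integrable (fun u : ℝ => Real.exp (-u ^ 2)) := by
  have := integrable_exp_neg_mul_sq (b := (1:ℝ)) one_pos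
  simpa using this

private lemma expSplit (a b : ℝ) (hab : a ≤ b) :
    ∫ u in Set.Ioi a, Real.exp (-u^2)
      = (∫ u in Set.Ioc a b, Real.exp (-u^2)) + ∫ u in Set.Ioi b, Real.exp (-u^2) := by
  rw [← setIntegral_union (Set.Ioc_disjoint_Ioi le_rfl) measurableSet_Ioi
    expInt.integrableOn expInt.integrableOn, Set.Ioc_union_Ioi_eq_Ioi hab]

private lemma exp_lower (c : ℝ) (h0 : 0 ≤ c) (hc : c ≤ 32) :
    (1 - c/32)^(32:ℕ) ≤ Real.exp (-c) := by
  have h1 : (0:ℝ) ≤ 1 - c/32 := by linarith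
  have h2 : 1 - c/32 ≤ Real.exp (-(c/32)) := by
    have := Real.add_one_le_exp (-(c/32)); linarith
  calc (1 - c/32)^(32:ℕ) ≤ (Real.exp (-(c/32)))^(32:ℕ) := pow_le_pow_left₀ h1 h2 32
    _ = Real.exp (-c) := by rw [← Real.exp_nat_mul]; norm_num; ring_nf

private lemma exp_upper (c : ℝ) (h0 : 0 ≤ c) : Real.exp (-c) ≤ (32/(32+c))^(32:ℕ) := by
  have hpos : (0:ℝ) < 1 + c/32 := by linarith
  have h2 : 1 + c/32 ≤ Real.exp (c/32) := by
    have := Real.add_one_le_exp (c/32); linarith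
  have h3 : Real.exp (-(c/32)) ≤ 32/(32+c) := by
    rw [Real.exp_neg]
    calc (Real.exp (c/32))⁻¹ ≤ (1 + c/32)⁻¹ := inv_anti₀ hpos h2
      _ = 32/(32+c) := by field_simp
  calc Real.exp (-c) = (Real.exp (-(c/32)))^(32:ℕ) := by rw [← Real.exp_nat_mul]; norm_num; ring_nf
    _ ≤ (32/(32+c))^(32:ℕ) := pow_le_pow_left₀ (exp_pos _).le h3 32

private lemma step_low (a b m : ℝ) (ha : 0 ≤ a) (hab : a ≤ b) (hm : m ≤ Real.exp (-b^2)) :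
    (b - a) * m ≤ ∫ u in Set.Ioc a b, Real.exp (-u^2) := by
  rw [← intervalIntegral.integral_of_le hab]
  have h := intervalIntegral.integral_mono_on (f := fun _ : ℝ => m)
    (g := fun u : ℝ => Real.exp (-u^2)) (μ := volume) hab intervalIntegrable_const
    expInt.intervalIntegrable ?_
  · simpa using h
  · intro x hx
    refine hm.trans (Real.exp_le_exp.mpr ?_)
    have h1 := hx.1; have h2 := hx.2
    nlinarith

private lemma step_up (a b M : ℝ) (ha : 0 ≤ a) (hab : a ≤ b) (hM : Real.exp (-a^2) ≤ M) :
    ∫ u in Set.Ioc a b, Real.exp (-u^2) ≤ (b - a) * M := by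
  rw [← intervalIntegral.integral_of_le hab]
  have h := intervalIntegral.integral_mono_on (f := fun u : ℝ => Real.exp (-u^2))
    (g := fun _ : ℝ => M) (μ := volume) hab expInt.intervalIntegrable
    intervalIntegrable_const ?_
  · simpa using h
  · intro x hx
    refine le_trans (Real.exp_le_exp.mpr ?_) hM
    have h1 := hx.1; have h2 := hx.2
    nlinarith

private lemma tail_le : ∫ u in Set.Ioi (2.5:ℝ), Real.exp (-u^2) ≤ Real.exp (-(6.25:ℝ)) := by
  have hmono : ∀ u ∈ Set.Ioi (2.5:ℝ), Real.exp (-u^2) ≤ Real.exp (-(3.75:ℝ)) * Real.exp (-u) := by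
    intro u hu
    rw [← Real.exp_add]
    apply Real.exp_le_exp.mpr
    simp only [Set.mem_Ioi] at hu
    nlinarith
  have h1 : IntegrableOn (fun u : ℝ => Real.exp (-(3.75:ℝ)) * Real.exp (-u)) (Set.Ioi 2.5) := by
    apply Integrable.const_mul
    have := exp_neg_integrableOn_Ioi (2.5:ℝ) (b := (1:ℝ)) one_pos
    simpa [IntegrableOn] using this
  calc ∫ u in Set.Ioi (2.5:ℝ), Real.exp (-u^2)
      ≤ ∫ u in Set.Ioi (2.5:ℝ), Real.exp (-(3.75:ℝ)) * Real.exp (-u) :=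
        setIntegral_mono_on expInt.integrableOn h1 measurableSet_Ioi hmono
    _ = Real.exp (-(3.75:ℝ)) * ∫ u in Set.Ioi (2.5:ℝ), Real.exp (-u) := by
        rw [MeasureTheory.integral_const_mul]
    _ = Real.exp (-(3.75:ℝ)) * Real.exp (-(2.5:ℝ)) := by rw [integral_exp_neg_Ioi]
    _ = Real.exp (-(6.25:ℝ)) := by rw [← Real.exp_add]; norm_num

private lemma alg1 {s : ℝ} (hs : s ≠ 0) (a z I : ℝ) :
    a / s - z * (2 / s * I) = (a - 2*z*I) * s⁻¹ := by
  field_simp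

private lemma alg2 {s : ℝ} (hs : s ≠ 0) (a z I : ℝ) :
    2 * (a / s - z * (2 / s * I)) = (2*a - 4*z*I) * s⁻¹ := by
  field_simp; ring

set_option maxHeartbeats 4000000 in
/-- For Gaussian arms `(μ₁, σ₁) = (0, 1)`, `(μ₂, σ₂) = (−1, 2)` and threshold
`m = 0.5`, the EI quantities satisfy `σ₁ ierfc ζ₁ < σ₂ ierfc ζ₂` while the PI
quantities satisfy `erfc ζ₁ > erfc ζ₂`: the EI (max-bandit) oracle and the PI
oracle select different best arms. -/
theorem ei_pi_oracles_disagree :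
    (1 : ℝ) * ierfc (((0.5 : ℝ) - 0) / (Real.sqrt 2 * 1)) <
      (2 : ℝ) * ierfc (((0.5 : ℝ) - (-1)) / (Real.sqrt 2 * 2)) ∧
    erfc (((0.5 : ℝ) - (-1)) / (Real.sqrt 2 * 2)) <
      erfc (((0.5 : ℝ) - 0) / (Real.sqrt 2 * 1)) := by
  have hs2 : (0:ℝ) < Real.sqrt 2 := Real.sqrt_pos.mpr (by norm_num)
  have h2l : (1.4142:ℝ) ≤ Real.sqrt 2 := by
    rw [show (1.4142:ℝ) = Real.sqrt (1.4142^2) from (Real.sqrt_sq (by norm_num)).symm]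
    exact Real.sqrt_le_sqrt (by norm_num)
  have h2u : Real.sqrt 2 ≤ 1.41422 := by
    rw [show (1.41422:ℝ) = Real.sqrt (1.41422^2) from (Real.sqrt_sq (by norm_num)).symm]
    exact Real.sqrt_le_sqrt (by norm_num)
  set z1 : ℝ := ((0.5 : ℝ) - 0) / (Real.sqrt 2 * 1) with hz1def
  set z2 : ℝ := ((0.5 : ℝ) - (-1)) / (Real.sqrt 2 * 2) with hz2def
  have hz1l : (0.3535:ℝ) ≤ z1 := by
    rw [hz1def, le_div_iff₀ (by positivity)]; nlinarith
  have hz1u : z1 ≤ 0.354 := by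
    rw [hz1def, div_le_iff₀ (by positivity)]; nlinarith
  have hz2l : (0.53:ℝ) ≤ z2 := by
    rw [hz2def, le_div_iff₀ (by positivity)]; nlinarith
  have hz2u : z2 ≤ 0.5304 := by
    rw [hz2def, div_le_iff₀ (by positivity)]; nlinarith
  have hsq2 : Real.sqrt 2 ^ 2 = 2 := Real.sq_sqrt (by norm_num)
  have hz1sq : z1^2 = 1/8 := by
    rw [hz1def, div_pow, mul_pow, hsq2]; norm_num
  have hz2sq : z2^2 = 9/32 := by
    rw [hz2def, div_pow, mul_pow, hsq2]; norm_num
  have hSpos : (0:ℝ) < Real.sqrt π := Real.sqrt_pos.mpr Real.pi_pos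
  have hT0 : (0:ℝ) ≤ ∫ u in Set.Ioi (2:ℝ), Real.exp (-u^2) :=
    setIntegral_nonneg measurableSet_Ioi (fun x _ => (Real.exp_pos _).le)
  have hL16 : (0.00064078:ℝ) ≤ ∫ u in Set.Ioi (1.954:ℝ), Real.exp (-u^2) := by
    rw [expSplit 1.954 2 (by norm_num)]
    have hs := step_low 1.954 2 0.01393 (by norm_num) (by norm_num)
      (le_trans (by norm_num) (exp_lower ((2:ℝ)^2) (by positivity) (by norm_num)))
    linarith [hT0]
  have hL15 : (0.00235478:ℝ) ≤ ∫ u in Set.Ioi (1.854:ℝ), Real.exp (-u^2) := by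
    rw [expSplit 1.854 1.954 (by norm_num)]
    have hs := step_low 1.854 1.954 0.01714 (by norm_num) (by norm_num)
      (le_trans (by norm_num) (exp_lower ((1.954:ℝ)^2) (by positivity) (by norm_num)))
    linarith [hL16]
  have hL14 : (0.00498878:ℝ) ≤ ∫ u in Set.Ioi (1.754:ℝ), Real.exp (-u^2) := by
    rw [expSplit 1.754 1.854 (by norm_num)]
    have hs := step_low 1.754 1.854 0.02634 (by norm_num) (by norm_num)
      (le_trans (by norm_num) (exp_lower ((1.854:ℝ)^2) (by positivity) (by norm_num)))
    linarith [hL15]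
  have hL13 : (0.00892578:ℝ) ≤ ∫ u in Set.Ioi (1.654:ℝ), Real.exp (-u^2) := by
    rw [expSplit 1.654 1.754 (by norm_num)]
    have hs := step_low 1.654 1.754 0.03937 (by norm_num) (by norm_num)
      (le_trans (by norm_num) (exp_lower ((1.754:ℝ)^2) (by positivity) (by norm_num)))
    linarith [hL14]
  have hL12 : (0.01465378:ℝ) ≤ ∫ u in Set.Ioi (1.554:ℝ), Real.exp (-u^2) := by
    rw [expSplit 1.554 1.654 (by norm_num)]
    have hs := step_low 1.554 1.654 0.05728 (by norm_num) (by norm_num)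
      (le_trans (by norm_num) (exp_lower ((1.654:ℝ)^2) (by positivity) (by norm_num)))
    linarith [hL13]
  have hL11 : (0.02277278:ℝ) ≤ ∫ u in Set.Ioi (1.454:ℝ), Real.exp (-u^2) := by
    rw [expSplit 1.454 1.554 (by norm_num)]
    have hs := step_low 1.454 1.554 0.08119 (by norm_num) (by norm_num)
      (le_trans (by norm_num) (exp_lower ((1.554:ℝ)^2) (by positivity) (by norm_num)))
    linarith [hL12]
  have hL10 : (0.03399578:ℝ) ≤ ∫ u in Set.Ioi (1.354:ℝ), Real.exp (-u^2) := by
    rw [expSplit 1.354 1.454 (by norm_num)]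
    have hs := step_low 1.354 1.454 0.11223 (by norm_num) (by norm_num)
      (le_trans (by norm_num) (exp_lower ((1.454:ℝ)^2) (by positivity) (by norm_num)))
    linarith [hL11]
  have hL9 : (0.04913378:ℝ) ≤ ∫ u in Set.Ioi (1.254:ℝ), Real.exp (-u^2) := by
    rw [expSplit 1.254 1.354 (by norm_num)]
    have hs := step_low 1.254 1.354 0.15138 (by norm_num) (by norm_num)
      (le_trans (by norm_num) (exp_lower ((1.354:ℝ)^2) (by positivity) (by norm_num)))
    linarith [hL10]
  have hL8 : (0.06907278:ℝ) ≤ ∫ u in Set.Ioi (1.154:ℝ), Real.exp (-u^2) := by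
    rw [expSplit 1.154 1.254 (by norm_num)]
    have hs := step_low 1.154 1.254 0.19939 (by norm_num) (by norm_num)
      (le_trans (by norm_num) (exp_lower ((1.254:ℝ)^2) (by positivity) (by norm_num)))
    linarith [hL9]
  have hL7 : (0.09473278:ℝ) ≤ ∫ u in Set.Ioi (1.054:ℝ), Real.exp (-u^2) := by
    rw [expSplit 1.054 1.154 (by norm_num)]
    have hs := step_low 1.054 1.154 0.2566 (by norm_num) (by norm_num)
      (le_trans (by norm_num) (exp_lower ((1.154:ℝ)^2) (by positivity) (by norm_num)))
    linarith [hL8]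
  have hL6 : (0.12701478:ℝ) ≤ ∫ u in Set.Ioi (0.954:ℝ), Real.exp (-u^2) := by
    rw [expSplit 0.954 1.054 (by norm_num)]
    have hs := step_low 0.954 1.054 0.32282 (by norm_num) (by norm_num)
      (le_trans (by norm_num) (exp_lower ((1.054:ℝ)^2) (by positivity) (by norm_num)))
    linarith [hL7]
  have hL5 : (0.16673478:ℝ) ≤ ∫ u in Set.Ioi (0.854:ℝ), Real.exp (-u^2) := by
    rw [expSplit 0.854 0.954 (by norm_num)]
    have hs := step_low 0.854 0.954 0.3972 (by norm_num) (by norm_num)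
      (le_trans (by norm_num) (exp_lower ((0.954:ℝ)^2) (by positivity) (by norm_num)))
    linarith [hL6]
  have hL4 : (0.21455278:ℝ) ≤ ∫ u in Set.Ioi (0.754:ℝ), Real.exp (-u^2) := by
    rw [expSplit 0.754 0.854 (by norm_num)]
    have hs := step_low 0.754 0.854 0.47818 (by norm_num) (by norm_num)
      (le_trans (by norm_num) (exp_lower ((0.854:ℝ)^2) (by positivity) (by norm_num)))
    linarith [hL5]
  have hL3 : (0.27089978:ℝ) ≤ ∫ u in Set.Ioi (0.654:ℝ), Real.exp (-u^2) := by
    rw [expSplit 0.654 0.754 (by norm_num)]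
    have hs := step_low 0.654 0.754 0.56347 (by norm_num) (by norm_num)
      (le_trans (by norm_num) (exp_lower ((0.754:ℝ)^2) (by positivity) (by norm_num)))
    linarith [hL4]
  have hL2 : (0.33591078:ℝ) ≤ ∫ u in Set.Ioi (0.554:ℝ), Real.exp (-u^2) := by
    rw [expSplit 0.554 0.654 (by norm_num)]
    have hs := step_low 0.554 0.654 0.65011 (by norm_num) (by norm_num)
      (le_trans (by norm_num) (exp_lower ((0.654:ℝ)^2) (by positivity) (by norm_num)))
    linarith [hL3]
  have hL1 : (0.40937278:ℝ) ≤ ∫ u in Set.Ioi (0.454:ℝ), Real.exp (-u^2) := by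
    rw [expSplit 0.454 0.554 (by norm_num)]
    have hs := step_low 0.454 0.554 0.73462 (by norm_num) (by norm_num)
      (le_trans (by norm_num) (exp_lower ((0.554:ℝ)^2) (by positivity) (by norm_num)))
    linarith [hL2]
  have hL0 : (0.49069178:ℝ) ≤ ∫ u in Set.Ioi (0.354:ℝ), Real.exp (-u^2) := by
    rw [expSplit 0.354 0.454 (by norm_num)]
    have hs := step_low 0.354 0.454 0.81319 (by norm_num) (by norm_num)
      (le_trans (by norm_num) (exp_lower ((0.454:ℝ)^2) (by positivity) (by norm_num)))
    linarith [hL1]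
  have hUtail : ∫ u in Set.Ioi (2.5:ℝ), Real.exp (-u^2) ≤ (0.00332:ℝ) :=
    le_trans tail_le (le_trans (exp_upper (6.25:ℝ) (by norm_num)) (by norm_num))
  have hU19 : ∫ u in Set.Ioi (2.43:ℝ), Real.exp (-u^2) ≤ (0.0036308:ℝ) := by
    rw [expSplit 2.43 2.5 (by norm_num)]
    have hs := step_up 2.43 2.5 0.00444 (by norm_num) (by norm_num)
      (le_trans (exp_upper ((2.43:ℝ)^2) (by positivity)) (by norm_num))
    linarith [hUtail]
  have hU18 : ∫ u in Set.Ioi (2.33:ℝ), Real.exp (-u^2) ≤ (0.0042958:ℝ) := by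
    rw [expSplit 2.33 2.43 (by norm_num)]
    have hs := step_up 2.33 2.43 0.00665 (by norm_num) (by norm_num)
      (le_trans (exp_upper ((2.33:ℝ)^2) (by positivity)) (by norm_num))
    linarith [hU19]
  have hU17 : ∫ u in Set.Ioi (2.23:ℝ), Real.exp (-u^2) ≤ (0.0052788:ℝ) := by
    rw [expSplit 2.23 2.33 (by norm_num)]
    have hs := step_up 2.23 2.33 0.00983 (by norm_num) (by norm_num)
      (le_trans (exp_upper ((2.23:ℝ)^2) (by positivity)) (by norm_num))
    linarith [hU18]
  have hU16 : ∫ u in Set.Ioi (2.13:ℝ), Real.exp (-u^2) ≤ (0.0067158:ℝ) := by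
    rw [expSplit 2.13 2.23 (by norm_num)]
    have hs := step_up 2.13 2.23 0.01437 (by norm_num) (by norm_num)
      (le_trans (exp_upper ((2.13:ℝ)^2) (by positivity)) (by norm_num))
    linarith [hU17]
  have hU15 : ∫ u in Set.Ioi (2.03:ℝ), Real.exp (-u^2) ≤ (0.0087888:ℝ) := by
    rw [expSplit 2.03 2.13 (by norm_num)]
    have hs := step_up 2.03 2.13 0.02073 (by norm_num) (by norm_num)
      (le_trans (exp_upper ((2.03:ℝ)^2) (by positivity)) (by norm_num))
    linarith [hU16]
  have hU14 : ∫ u in Set.Ioi (1.93:ℝ), Real.exp (-u^2) ≤ (0.0117388:ℝ) := by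
    rw [expSplit 1.93 2.03 (by norm_num)]
    have hs := step_up 1.93 2.03 0.0295 (by norm_num) (by norm_num)
      (le_trans (exp_upper ((1.93:ℝ)^2) (by positivity)) (by norm_num))
    linarith [hU15]
  have hU13 : ∫ u in Set.Ioi (1.83:ℝ), Real.exp (-u^2) ≤ (0.0158768:ℝ) := by
    rw [expSplit 1.83 1.93 (by norm_num)]
    have hs := step_up 1.83 1.93 0.04138 (by norm_num) (by norm_num)
      (le_trans (exp_upper ((1.83:ℝ)^2) (by positivity)) (by norm_num))
    linarith [hU14]
  have hU12 : ∫ u in Set.Ioi (1.73:ℝ), Real.exp (-u^2) ≤ (0.0215978:ℝ) := by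
    rw [expSplit 1.73 1.83 (by norm_num)]
    have hs := step_up 1.73 1.83 0.05721 (by norm_num) (by norm_num)
      (le_trans (exp_upper ((1.73:ℝ)^2) (by positivity)) (by norm_num))
    linarith [hU13]
  have hU11 : ∫ u in Set.Ioi (1.63:ℝ), Real.exp (-u^2) ≤ (0.0293878:ℝ) := by
    rw [expSplit 1.63 1.73 (by norm_num)]
    have hs := step_up 1.63 1.73 0.0779 (by norm_num) (by norm_num)
      (le_trans (exp_upper ((1.63:ℝ)^2) (by positivity)) (by norm_num))
    linarith [hU12]
  have hU10 : ∫ u in Set.Ioi (1.53:ℝ), Real.exp (-u^2) ≤ (0.0398318:ℝ) := by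
    rw [expSplit 1.53 1.63 (by norm_num)]
    have hs := step_up 1.53 1.63 0.10444 (by norm_num) (by norm_num)
      (le_trans (exp_upper ((1.53:ℝ)^2) (by positivity)) (by norm_num))
    linarith [hU11]
  have hU9 : ∫ u in Set.Ioi (1.43:ℝ), Real.exp (-u^2) ≤ (0.0536088:ℝ) := by
    rw [expSplit 1.43 1.53 (by norm_num)]
    have hs := step_up 1.43 1.53 0.13777 (by norm_num) (by norm_num)
      (le_trans (exp_upper ((1.43:ℝ)^2) (by positivity)) (by norm_num))
    linarith [hU10]
  have hU8 : ∫ u in Set.Ioi (1.33:ℝ), Real.exp (-u^2) ≤ (0.0714848:ℝ) := by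
    rw [expSplit 1.33 1.43 (by norm_num)]
    have hs := step_up 1.33 1.43 0.17876 (by norm_num) (by norm_num)
      (le_trans (exp_upper ((1.33:ℝ)^2) (by positivity)) (by norm_num))
    linarith [hU9]
  have hU7 : ∫ u in Set.Ioi (1.23:ℝ), Real.exp (-u^2) ≤ (0.0942898:ℝ) := by
    rw [expSplit 1.23 1.33 (by norm_num)]
    have hs := step_up 1.23 1.33 0.22805 (by norm_num) (by norm_num)
      (le_trans (exp_upper ((1.23:ℝ)^2) (by positivity)) (by norm_num))
    linarith [hU8]
  have hU6 : ∫ u in Set.Ioi (1.13:ℝ), Real.exp (-u^2) ≤ (0.1228808:ℝ) := by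
    rw [expSplit 1.13 1.23 (by norm_num)]
    have hs := step_up 1.13 1.23 0.28591 (by norm_num) (by norm_num)
      (le_trans (exp_upper ((1.13:ℝ)^2) (by positivity)) (by norm_num))
    linarith [hU7]
  have hU5 : ∫ u in Set.Ioi (1.03:ℝ), Real.exp (-u^2) ≤ (0.1580968:ℝ) := by
    rw [expSplit 1.03 1.13 (by norm_num)]
    have hs := step_up 1.03 1.13 0.35216 (by norm_num) (by norm_num)
      (le_trans (exp_upper ((1.03:ℝ)^2) (by positivity)) (by norm_num))
    linarith [hU6]
  have hU4 : ∫ u in Set.Ioi (0.93:ℝ), Real.exp (-u^2) ≤ (0.2006928:ℝ) := by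
    rw [expSplit 0.93 1.03 (by norm_num)]
    have hs := step_up 0.93 1.03 0.42596 (by norm_num) (by norm_num)
      (le_trans (exp_upper ((0.93:ℝ)^2) (by positivity)) (by norm_num))
    linarith [hU5]
  have hU3 : ∫ u in Set.Ioi (0.83:ℝ), Real.exp (-u^2) ≤ (0.2512748:ℝ) := by
    rw [expSplit 0.83 0.93 (by norm_num)]
    have hs := step_up 0.83 0.93 0.50582 (by norm_num) (by norm_num)
      (le_trans (exp_upper ((0.83:ℝ)^2) (by positivity)) (by norm_num))
    linarith [hU4]
  have hU2 : ∫ u in Set.Ioi (0.73:ℝ), Real.exp (-u^2) ≤ (0.3102238:ℝ) := by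
    rw [expSplit 0.73 0.83 (by norm_num)]
    have hs := step_up 0.73 0.83 0.58949 (by norm_num) (by norm_num)
      (le_trans (exp_upper ((0.73:ℝ)^2) (by positivity)) (by norm_num))
    linarith [hU3]
  have hU1 : ∫ u in Set.Ioi (0.63:ℝ), Real.exp (-u^2) ≤ (0.3776288:ℝ) := by
    rw [expSplit 0.63 0.73 (by norm_num)]
    have hs := step_up 0.63 0.73 0.67405 (by norm_num) (by norm_num)
      (le_trans (exp_upper ((0.63:ℝ)^2) (by positivity)) (by norm_num))
    linarith [hU2]
  have hU0 : ∫ u in Set.Ioi (0.53:ℝ), Real.exp (-u^2) ≤ (0.4532318:ℝ) := by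
    rw [expSplit 0.53 0.63 (by norm_num)]
    have hs := step_up 0.53 0.63 0.75603 (by norm_num) (by norm_num)
      (le_trans (exp_upper ((0.53:ℝ)^2) (by positivity)) (by norm_num))
    linarith [hU1]
  have hI1 : (0.49069178:ℝ) ≤ ∫ u in Set.Ioi z1, Real.exp (-u^2) := by
    rw [expSplit z1 0.354 hz1u]
    have := setIntegral_nonneg (μ := volume) (s := Set.Ioc z1 (0.354:ℝ))
      measurableSet_Ioc (fun x _ => (Real.exp_pos (-x^2)).le)
    linarith [hL0]
  have hI2 : ∫ u in Set.Ioi z2, Real.exp (-u^2) ≤ (0.4532318:ℝ) := by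
    have hsplit := expSplit 0.53 z2 hz2l
    have hnn := setIntegral_nonneg (μ := volume) (s := Set.Ioc (0.53:ℝ) z2)
      measurableSet_Ioc (fun x _ => (Real.exp_pos (-x^2)).le)
    rw [hsplit] at hU0
    linarith [hU0]
  have hI2nn : (0:ℝ) ≤ ∫ u in Set.Ioi z2, Real.exp (-u^2) :=
    setIntegral_nonneg measurableSet_Ioi (fun x _ => (Real.exp_pos _).le)
  have hE1 : Real.exp (-z1^2) ≤ 0.88272 := by
    rw [hz1sq]
    exact le_trans (exp_upper (1/8) (by norm_num)) (by norm_num)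
  have hE2 : (0.7539:ℝ) ≤ Real.exp (-z2^2) := by
    rw [hz2sq]
    exact le_trans (by norm_num) (exp_lower (9/32) (by norm_num) (by norm_num))
  have p1 : (0.3535:ℝ) * 0.49069178 ≤ z1 * ∫ u in Set.Ioi z1, Real.exp (-u^2) :=
    mul_le_mul hz1l hI1 (by norm_num) (by linarith)
  have p2 : z2 * ∫ u in Set.Ioi z2, Real.exp (-u^2) ≤ (0.5304:ℝ) * 0.4532318 :=
    mul_le_mul hz2u hI2 hI2nn (by norm_num)
  have key : Real.exp (-z1^2) - 2 * z1 * ∫ u in Set.Ioi z1, Real.exp (-u^2)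
      < 2 * Real.exp (-z2^2) - 4 * z2 * ∫ u in Set.Ioi z2, Real.exp (-u^2) := by
    linarith [hE1, hE2, p1, p2]
  have hSne : Real.sqrt π ≠ 0 := ne_of_gt hSpos
  constructor
  · simp only [ierfc, erfc, one_mul]
    rw [alg1 hSne (Real.exp (-z1^2)) z1 (∫ u in Set.Ioi z1, Real.exp (-u^2)),
      alg2 hSne (Real.exp (-z2^2)) z2 (∫ u in Set.Ioi z2, Real.exp (-u^2))]
    exact mul_lt_mul_of_pos_right key (inv_pos.mpr hSpos)
  · simp only [erfc]
    have hlt : (∫ u in Set.Ioi z2, Real.exp (-u^2)) < ∫ u in Set.Ioi z1, Real.exp (-u^2) := by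
      rw [expSplit z1 z2 (by linarith)]
      have hm : (0.7539:ℝ) ≤ Real.exp (-z2^2) := hE2
      have hs := step_low z1 z2 0.7539 (by linarith) (by linarith) hm
      have hgap : (0.13:ℝ) ≤ (z2 - z1) * 0.7539 := by linarith
      linarith [hs, hgap]
    exact mul_lt_mul_of_pos_left hlt (by positivity)
end

section
/- Let Z be a random variable with 0 ≤ Z ≤ 1 and let P, P' be probability measures with P ≪ P'. Then KL(P, P') ≥ kl(E[Z], E'[Z]), where kl is the Bernoulli KL divergence and E, E' denote expectations under P, P' respectively. -/
open MeasureTheory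

/-- Bernoulli KL divergence `kl(p,q) = p ln(p/q) + (1−p) ln((1−p)/(1−q))`. -/
noncomputable def bernKL (p q : ℝ) : ℝ :=
  p * Real.log (p / q) + (1 - p) * Real.log ((1 - p) / (1 - q))

section Aux

open Real Filter
open scoped ENNReal

variable {Ω : Type*} [MeasurableSpace Ω]

/-- Donsker–Varadhan-type inequality for bounded `g`. -/
lemma dv_bound (P P' : Measure Ω) [IsProbabilityMeasure P] [IsProbabilityMeasure P']
    (hac : P ≪ P')
    (hint : Integrable (fun ω => Real.log ((P.rnDeriv P' ω).toReal)) P)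
    (g : Ω → ℝ) (hg : Measurable g) (B : ℝ) (hgB : ∀ ω, |g ω| ≤ B) :
    (∫ ω, g ω ∂P) - Real.log (∫ ω, Real.exp (g ω) ∂P')
      ≤ ∫ ω, Real.log ((P.rnDeriv P' ω).toReal) ∂P := by
  set r : Ω → ℝ := fun ω => (P.rnDeriv P' ω).toReal with hr
  have hrmeas : Measurable r := (Measure.measurable_rnDeriv P P').ennreal_toReal
  -- integrability of exp g under P'
  have hexp_meas : Measurable fun ω => Real.exp (g ω) := Real.measurable_exp.comp hg
  have hexp_int : Integrable (fun ω => Real.exp (g ω)) P' := by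
    refine (integrable_const (Real.exp B)).mono' hexp_meas.aestronglyMeasurable ?_
    refine ae_of_all _ fun ω => ?_
    rw [Real.norm_eq_abs, abs_of_pos (Real.exp_pos _)]
    exact Real.exp_le_exp.2 ((le_abs_self _).trans (hgB ω))
  set c : ℝ := ∫ ω, Real.exp (g ω) ∂P' with hc
  have hcpos : 0 < c := by
    have h1 : Real.exp (-B) ≤ c := by
      rw [hc]
      have := integral_mono (integrable_const (Real.exp (-B))) hexp_int
        (fun ω => Real.exp_le_exp.2 ((neg_le_of_abs_le (hgB ω))))
      simpa using this
    exact lt_of_lt_of_le (Real.exp_pos _) h1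
  -- g integrable under P
  have hg_int : Integrable g P := by
    refine (integrable_const B).mono' hg.aestronglyMeasurable (ae_of_all _ fun ω => ?_)
    simpa using hgB ω
  -- the comparison function
  set h : Ω → ℝ := fun ω => Real.exp (g ω) / (r ω * c) with hh
  have hh_meas : Measurable h := hexp_meas.div (hrmeas.mul measurable_const)
  have hh_nonneg : ∀ ω, 0 ≤ h ω := fun ω =>
    div_nonneg (Real.exp_pos _).le (mul_nonneg ENNReal.toReal_nonneg hcpos.le)
  -- a.e. P facts about rnDeriv
  have hr_pos : ∀ᵐ ω ∂P, 0 < P.rnDeriv P' ω := Measure.rnDeriv_pos hac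
  have hr_fin : ∀ᵐ ω ∂P, P.rnDeriv P' ω < ⊤ := hac.ae_le (Measure.rnDeriv_lt_top P P')
  -- lintegral bound for h under P
  have hlint : ∫⁻ ω, ENNReal.ofReal (h ω) ∂P ≤ 1 := by
    rw [← lintegral_rnDeriv_mul hac
      (by exact (ENNReal.measurable_ofReal.comp hh_meas).aemeasurable)]
    have hle : ∀ᵐ ω ∂P', P.rnDeriv P' ω * ENNReal.ofReal (h ω)
        ≤ ENNReal.ofReal (Real.exp (g ω) / c) := by
      filter_upwards [Measure.rnDeriv_lt_top P P'] with ω hfin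
      rcases eq_or_ne (P.rnDeriv P' ω) 0 with h0 | h0
      · simp [h0]
      · have hrpos : 0 < r ω := ENNReal.toReal_pos h0 hfin.ne
        have : P.rnDeriv P' ω = ENNReal.ofReal (r ω) := by
          rw [hr]; exact (ENNReal.ofReal_toReal hfin.ne).symm
        rw [this, ← ENNReal.ofReal_mul ENNReal.toReal_nonneg]
        apply ENNReal.ofReal_le_ofReal
        apply le_of_eq
        rw [hh, show (P.rnDeriv P' ω).toReal = r ω from rfl]
        field_simp
      
    calc ∫⁻ ω, P.rnDeriv P' ω * ENNReal.ofReal (h ω) ∂P'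
        ≤ ∫⁻ ω, ENNReal.ofReal (Real.exp (g ω) / c) ∂P' := lintegral_mono_ae hle
      _ = ENNReal.ofReal (∫ ω, Real.exp (g ω) / c ∂P') := by
          rw [← ofReal_integral_eq_lintegral_ofReal (hexp_int.div_const c)
            (ae_of_all _ fun ω => div_nonneg (Real.exp_pos _).le hcpos.le)]
      _ = 1 := by
          rw [integral_div, ← hc, div_self hcpos.ne']
          simp
  have hh_int : Integrable h P := by
    refine ⟨hh_meas.aestronglyMeasurable, ?_⟩
    rw [hasFiniteIntegral_iff_ofReal (ae_of_all _ hh_nonneg)]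
    exact lt_of_le_of_lt hlint (by norm_num)
  have hh_intle : ∫ ω, h ω ∂P ≤ 1 := by
    rw [integral_eq_lintegral_of_nonneg_ae (ae_of_all _ hh_nonneg) hh_meas.aestronglyMeasurable]
    calc (∫⁻ ω, ENNReal.ofReal (h ω) ∂P).toReal ≤ (1 : ℝ≥0∞).toReal :=
          ENNReal.toReal_mono (by norm_num) hlint
      _ = 1 := by simp
  -- pointwise a.e. inequality
  have hptwise : ∀ᵐ ω ∂P, g ω - Real.log (r ω) - Real.log c ≤ h ω - 1 := by
    filter_upwards [hr_pos, hr_fin] with ω hpos hfin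
    have hrpos : 0 < r ω := ENNReal.toReal_pos hpos.ne' hfin.ne
    have hhpos : 0 < h ω := div_pos (Real.exp_pos _) (mul_pos hrpos hcpos)
    have hlog : Real.log (h ω) = g ω - Real.log (r ω) - Real.log c := by
      rw [hh]
      rw [Real.log_div (Real.exp_pos _).ne' (mul_pos hrpos hcpos).ne',
        Real.log_mul hrpos.ne' hcpos.ne', Real.log_exp]
      ring
    rw [← hlog]
    exact Real.log_le_sub_one_of_pos hhpos
  -- integrate
  have e0 : Integrable (fun ω => Real.log (r ω)) P := hint
  have e1 : Integrable (fun ω => g ω - Real.log (r ω)) P := hg_int.sub e0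
  have e2 : Integrable (fun ω => g ω - Real.log (r ω) - Real.log c) P :=
    e1.sub (integrable_const _)
  have e3 : Integrable (fun ω => h ω - 1) P := hh_int.sub (integrable_const _)
  have hintineq : ∫ ω, (g ω - Real.log (r ω) - Real.log c) ∂P ≤ ∫ ω, (h ω - 1) ∂P :=
    integral_mono_ae e2 e3 hptwise
  have hL : ∫ ω, (g ω - Real.log (r ω) - Real.log c) ∂P
      = (∫ ω, g ω ∂P) - (∫ ω, Real.log (r ω) ∂P) - Real.log c := by
    rw [integral_sub e1 (integrable_const _), integral_sub hg_int e0]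
    simp
  have hR : ∫ ω, (h ω - 1) ∂P = (∫ ω, h ω ∂P) - 1 := by
    rw [integral_sub hh_int (integrable_const _)]; simp
  rw [hL, hR] at hintineq
  have hre : ∫ ω, Real.log (r ω) ∂P = ∫ ω, Real.log ((P.rnDeriv P' ω).toReal) ∂P := rfl
  rw [← hre]
  linarith

/-- For every `λ`, `λ p - log (1 + q (e^λ - 1)) ≤ KL`. -/
lemma lambda_bound (P P' : Measure Ω) [IsProbabilityMeasure P] [IsProbabilityMeasure P']
    (hac : P ≪ P')
    (hint : Integrable (fun ω => Real.log ((P.rnDeriv P' ω).toReal)) P)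
    (Z : Ω → ℝ) (hZmeas : Measurable Z)
    (hZ01 : ∀ ω, 0 ≤ Z ω ∧ Z ω ≤ 1) (lam : ℝ) :
    lam * (∫ ω, Z ω ∂P) - Real.log (1 + (∫ ω, Z ω ∂P') * (Real.exp lam - 1))
      ≤ ∫ ω, Real.log ((P.rnDeriv P' ω).toReal) ∂P := by
  have hZB : ∀ ω, |lam * Z ω| ≤ |lam| := by
    intro ω
    rw [abs_mul]
    calc |lam| * |Z ω| ≤ |lam| * 1 := by
          refine mul_le_mul_of_nonneg_left ?_ (abs_nonneg _)
          rw [abs_of_nonneg (hZ01 ω).1]; exact (hZ01 ω).2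
      _ = |lam| := mul_one _
  have hdv := dv_bound P P' hac hint (fun ω => lam * Z ω)
    (measurable_const.mul hZmeas) |lam| hZB
  have hZint : ∀ (μ : Measure Ω) [IsProbabilityMeasure μ], Integrable Z μ := by
    intro μ _
    refine (integrable_const (1:ℝ)).mono' hZmeas.aestronglyMeasurable (ae_of_all _ fun ω => ?_)
    rw [Real.norm_eq_abs, abs_of_nonneg (hZ01 ω).1]
    simpa using (hZ01 ω).2
  have hPint : ∫ ω, lam * Z ω ∂P = lam * ∫ ω, Z ω ∂P := integral_const_mul _ _
  -- bound the exponential moment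
  have hexp_meas : Measurable fun ω => Real.exp (lam * Z ω) :=
    Real.measurable_exp.comp (measurable_const.mul hZmeas)
  have hexp_int : Integrable (fun ω => Real.exp (lam * Z ω)) P' := by
    refine (integrable_const (Real.exp |lam|)).mono' hexp_meas.aestronglyMeasurable
      (ae_of_all _ fun ω => ?_)
    rw [Real.norm_eq_abs, abs_of_pos (Real.exp_pos _)]
    exact Real.exp_le_exp.2 ((le_abs_self _).trans (hZB ω))
  have hcpos : 0 < ∫ ω, Real.exp (lam * Z ω) ∂P' := by
    have h1 : Real.exp (-|lam|) ≤ ∫ ω, Real.exp (lam * Z ω) ∂P' := by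
      have := integral_mono (μ := P') (integrable_const (Real.exp (-|lam|))) hexp_int
        (fun ω => Real.exp_le_exp.2 (neg_le_of_abs_le (hZB ω)))
      simpa using this
    exact lt_of_lt_of_le (Real.exp_pos _) h1
  have hconv : ∀ ω, Real.exp (lam * Z ω) ≤ 1 + Z ω * (Real.exp lam - 1) := by
    intro ω
    obtain ⟨hz0, hz1⟩ := hZ01 ω
    have := convexOn_exp.2 (Set.mem_univ (0:ℝ)) (Set.mem_univ lam)
      (by linarith : (0:ℝ) ≤ 1 - Z ω) hz0 (by ring)
    simp only [smul_eq_mul, mul_zero, zero_add, Real.exp_zero] at this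
    calc Real.exp (lam * Z ω) = Real.exp (Z ω * lam) := by rw [mul_comm]
      _ ≤ (1 - Z ω) * 1 + Z ω * Real.exp lam := this
      _ = 1 + Z ω * (Real.exp lam - 1) := by ring
  have hcle : ∫ ω, Real.exp (lam * Z ω) ∂P' ≤ 1 + (∫ ω, Z ω ∂P') * (Real.exp lam - 1) := by
    have h2 : Integrable (fun ω => 1 + Z ω * (Real.exp lam - 1)) P' :=
      (integrable_const 1).add ((hZint P').mul_const _)
    have := integral_mono hexp_int h2 hconv
    rw [integral_add (integrable_const 1) ((hZint P').mul_const _),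
      integral_mul_const, integral_const, probReal_univ] at this
    simpa using this
  have hlog : Real.log (∫ ω, Real.exp (lam * Z ω) ∂P')
      ≤ Real.log (1 + (∫ ω, Z ω ∂P') * (Real.exp lam - 1)) :=
    Real.log_le_log hcpos hcle
  rw [hPint] at hdv
  linarith

lemma aux_pos {q : ℝ} (h0 : 0 < q) (h1 : q < 1) (lam : ℝ) :
    0 < 1 + q * (Real.exp lam - 1) := by
  nlinarith [Real.exp_pos lam, mul_pos h0 (Real.exp_pos lam)]


end Aux

open Real Filter
open scoped ENNReal

/-- Fundamental inequality (Garivier–Ménard–Stoltz): for probability measures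
`P ≪ P'` with `KL(P, P') = ∫ ln(dP/dP') dP`, and any `[0,1]`-valued random
variable `Z`, we have `KL(P, P') ≥ kl(E[Z], E'[Z])`. -/
theorem kl_ge_bernKL_of_mean
    {Ω : Type*} [MeasurableSpace Ω]
    (P P' : Measure Ω) [IsProbabilityMeasure P] [IsProbabilityMeasure P']
    (hac : P ≪ P')
    (KL : ℝ) (hKL : KL = ∫ ω, Real.log ((P.rnDeriv P' ω).toReal) ∂P)
    (hint : Integrable (fun ω => Real.log ((P.rnDeriv P' ω).toReal)) P)
    (Z : Ω → ℝ) (hZmeas : Measurable Z)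
    (hZ01 : ∀ ω, 0 ≤ Z ω ∧ Z ω ≤ 1) :
    bernKL (∫ ω, Z ω ∂P) (∫ ω, Z ω ∂P') ≤ KL := by
  have hZint : ∀ (μ : Measure Ω) [IsProbabilityMeasure μ], Integrable Z μ := by
    intro μ _
    refine (integrable_const (1:ℝ)).mono' hZmeas.aestronglyMeasurable (ae_of_all _ fun ω => ?_)
    rw [Real.norm_eq_abs, abs_of_nonneg (hZ01 ω).1]
    simpa using (hZ01 ω).2
  set p := ∫ ω, Z ω ∂P with hp
  set q := ∫ ω, Z ω ∂P' with hq
  have hp0 : 0 ≤ p := integral_nonneg fun ω => (hZ01 ω).1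
  have hq0 : 0 ≤ q := integral_nonneg fun ω => (hZ01 ω).1
  have hp1 : p ≤ 1 := by
    have := integral_mono (hZint P) (integrable_const 1) (fun ω => (hZ01 ω).2)
    simpa using this
  have hq1 : q ≤ 1 := by
    have := integral_mono (hZint P') (integrable_const 1) (fun ω => (hZ01 ω).2)
    simpa using this
  have key : ∀ lam : ℝ, lam * p - Real.log (1 + q * (Real.exp lam - 1)) ≤ KL := by
    intro lam
    rw [hKL]
    exact lambda_bound P P' hac hint Z hZmeas hZ01 lam
  have hKL0 : 0 ≤ KL := by
    have := key 0
    simpa using this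
  rcases eq_or_lt_of_le hq0 with hq0' | hqpos
  · -- q = 0, hence p = 0
    have hZ0 : Z =ᵐ[P'] 0 :=
      (integral_eq_zero_iff_of_nonneg (fun ω => (hZ01 ω).1) (hZint P')).1 hq0'.symm
    have hZ0P : Z =ᵐ[P] 0 := hac.ae_le hZ0
    have hp' : p = 0 := by
      rw [hp, integral_congr_ae hZ0P]; simp
    rw [hp', ← hq0']
    simpa [bernKL] using hKL0
  rcases eq_or_lt_of_le hq1 with hq1' | hqlt
  · -- q = 1, hence p = 1
    have hint1 : Integrable (fun ω => 1 - Z ω) P' := (integrable_const 1).sub (hZint P')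
    have hZ1 : (fun ω => 1 - Z ω) =ᵐ[P'] 0 := by
      refine (integral_eq_zero_iff_of_nonneg
        (fun ω => by simpa using (hZ01 ω).2) hint1).1 ?_
      rw [integral_sub (integrable_const 1) (hZint P'), ← hq, hq1']
      simp
    have hZ1P : (fun ω => 1 - Z ω) =ᵐ[P] 0 := hac.ae_le hZ1
    have hp' : p = 1 := by
      have : ∫ ω, (1 - Z ω) ∂P = 0 := by rw [integral_congr_ae hZ1P]; simp
      rw [integral_sub (integrable_const 1) (hZint P)] at this
      simp only [integral_const, measure_univ, probReal_univ, ENNReal.toReal_one, smul_eq_mul, one_mul] at this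
      rw [hp]; linarith
    rw [hp', hq1']
    simpa [bernKL] using hKL0
  -- now 0 < q < 1
  rcases eq_or_lt_of_le hp0 with hp0' | hppos
  · -- p = 0 : take λ → -∞
    have hF : ∀ lam : ℝ, -Real.log (1 + q * (Real.exp lam - 1)) ≤ KL := fun lam => by
      simpa [← hp0'] using key lam
    have h1q : (0:ℝ) < 1 - q := by linarith
    have htend : Tendsto (fun lam : ℝ => -Real.log (1 + q * (Real.exp lam - 1)))
        atBot (nhds (-Real.log (1 - q))) := by
      have h1 : Tendsto (fun lam : ℝ => 1 + q * (Real.exp lam - 1)) atBot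
          (nhds (1 + q * (0 - 1))) :=
        tendsto_const_nhds.add ((Real.tendsto_exp_atBot.sub tendsto_const_nhds).const_mul q)
      have h2 : (1:ℝ) + q * (0 - 1) = 1 - q := by ring
      rw [h2] at h1
      exact ((Real.continuousAt_log h1q.ne').tendsto.comp h1).neg
    have hlim : -Real.log (1 - q) ≤ KL := le_of_tendsto htend (Eventually.of_forall hF)
    rw [← hp0']
    have : bernKL 0 q = -Real.log (1 - q) := by
      simp [bernKL, Real.log_div one_ne_zero h1q.ne']
    rw [this]
    exact hlim
  rcases eq_or_lt_of_le hp1 with hp1' | hplt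
  · -- p = 1 : take λ → +∞
    have hF : ∀ lam : ℝ, -Real.log ((1 - q) * Real.exp (-lam) + q) ≤ KL := by
      intro lam
      have hpos := aux_pos hqpos hqlt lam
      have he : (1 - q) * Real.exp (-lam) + q
          = Real.exp (-lam) * (1 + q * (Real.exp lam - 1)) := by
        rw [Real.exp_neg]
        field_simp
        ring
      have hlog : Real.log ((1 - q) * Real.exp (-lam) + q)
          = -lam + Real.log (1 + q * (Real.exp lam - 1)) := by
        rw [he, Real.log_mul (Real.exp_pos _).ne' hpos.ne', Real.log_exp]
      rw [hlog]
      have := key lam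
      rw [hp1'] at this
      linarith
    have htend : Tendsto (fun lam : ℝ => -Real.log ((1 - q) * Real.exp (-lam) + q))
        atTop (nhds (-Real.log q)) := by
      have h1 : Tendsto (fun lam : ℝ => (1 - q) * Real.exp (-lam) + q) atTop
          (nhds ((1 - q) * 0 + q)) := by
        refine Tendsto.add ?_ tendsto_const_nhds
        exact (Real.tendsto_exp_atBot.comp tendsto_neg_atTop_atBot).const_mul _
      have h2 : (1 - q) * 0 + q = q := by ring
      rw [h2] at h1
      exact ((Real.continuousAt_log hqpos.ne').tendsto.comp h1).neg
    have hlim : -Real.log q ≤ KL := le_of_tendsto htend (Eventually.of_forall hF)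
    rw [hp1']
    have : bernKL 1 q = -Real.log q := by
      simp [bernKL, Real.log_div one_ne_zero hqpos.ne']
    rw [this]
    exact hlim
  · -- 0 < p < 1 : optimal λ
    have h1p : (0:ℝ) < 1 - p := by linarith
    have h1q : (0:ℝ) < 1 - q := by linarith
    set lam := Real.log (p * (1 - q) / (q * (1 - p))) with hlam
    have hx : 0 < p * (1 - q) / (q * (1 - p)) :=
      div_pos (mul_pos hppos h1q) (mul_pos hqpos h1p)
    have he : Real.exp lam = p * (1 - q) / (q * (1 - p)) := Real.exp_log hx
    have h1 : 1 + q * (Real.exp lam - 1) = (1 - q) / (1 - p) := by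
      rw [he]
      field_simp
      ring
    have hkey := key lam
    rw [h1] at hkey
    have hlameq : lam = Real.log p + Real.log (1 - q) - Real.log q - Real.log (1 - p) := by
      rw [hlam, Real.log_div (mul_pos hppos h1q).ne' (mul_pos hqpos h1p).ne',
        Real.log_mul hppos.ne' h1q.ne', Real.log_mul hqpos.ne' h1p.ne']
      ring
    have hlog2 : Real.log ((1 - q) / (1 - p)) = Real.log (1 - q) - Real.log (1 - p) :=
      Real.log_div h1q.ne' h1p.ne'
    have hbern : bernKL p q = lam * p - Real.log ((1 - q) / (1 - p)) := by
      rw [bernKL, hlameq, hlog2, Real.log_div hppos.ne' hqpos.ne',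
        Real.log_div h1p.ne' h1q.ne']
      ring
    rw [hbern]
    exact hkey
end
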